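/- For any algebraic number α over ℚ, there exists an integer k such that for every nonzero integer m, the degree of (α + k)^m over ℚ equals the degree of α over ℚ. -/

import Mathlib

open Polynomial IntermediateField

lemma aux_norm_eq_one {a : ℝ} (h0 : 0 ≤ a) {n : ℕ} (hn : 0 < n) (h : a ^ n = 1) : a ≤ 1 := by
  by_contra hlt
  push_neg at hlt
  have := one_lt_pow₀ hlt hn.ne'
  rw [h] at this; exact lt_irrefl 1 this

/-- Roots of unity in a finite-dimensional subfield of ℂ form a finite set. -/
lemma aux_rou_finite (E : IntermediateField ℚ ℂ) [FiniteDimensional ℚ E] :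
    {x : E | ∃ n : ℕ, 0 < n ∧ x ^ n = 1}.Finite := by
  haveI : CharZero E := charZero_of_injective_algebraMap (algebraMap ℚ E).injective
  haveI : NumberField E := ⟨⟩
  apply Set.Finite.subset (NumberField.Embeddings.finite_of_norm_le E ℂ 1)
  rintro x ⟨n, hn, hx⟩
  refine ⟨IsIntegral.of_pow hn (by rw [hx]; exact isIntegral_one), fun φ => ?_⟩
  have h1 : (φ x) ^ n = 1 := by rw [← map_pow, hx, map_one]
  have h2 : ‖φ x‖ ^ n = 1 := by rw [← norm_pow, h1, norm_one]
  exact aux_norm_eq_one (norm_nonneg _) hn h2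

/-- For fixed distinct a b in a finite-dimensional subfield E of ℂ, the set of integers k
for which (b+k)/(a+k) is a root of unity is finite. -/
lemma aux_bad_finite (E : IntermediateField ℚ ℂ) [FiniteDimensional ℚ E]
    {a b : ℂ} (ha : a ∈ E) (hb : b ∈ E) (hab : a ≠ b) :
    {k : ℤ | ∃ n : ℕ, 0 < n ∧ ((b + k) / (a + k)) ^ n = 1}.Finite := by
  set A : E := ⟨a, ha⟩
  set B : E := ⟨b, hb⟩
  have key : ∀ k : ℤ, ∀ n : ℕ, 0 < n → ((b + k) / (a + k)) ^ n = 1 → a + (k:ℂ) ≠ 0 := by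
    intro k n hn h hzero
    rw [hzero, div_zero, zero_pow hn.ne'] at h
    exact zero_ne_one h
  set g : ℤ → E := fun k => (B + k) / (A + k) with hg
  have hgc : ∀ k : ℤ, ((g k : ℂ)) = (b + k) / (a + k) := by
    intro k; push_cast [hg]; rfl
  apply Set.Finite.of_finite_image (f := g)
  · apply Set.Finite.subset (aux_rou_finite E)
    rintro x ⟨k, ⟨n, hn, hk⟩, rfl⟩
    refine ⟨n, hn, ?_⟩
    apply Subtype.coe_injective
    push_cast [hgc k]
    exact hk
  · rintro k ⟨n, hn, hk⟩ k' ⟨n', hn', hk'⟩ heq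
    have hak : A + (k:E) ≠ 0 := by
      intro h; apply key k n hn hk
      have := congrArg (Subtype.val) h; push_cast at this; exact this
    have hak' : A + (k':E) ≠ 0 := by
      intro h; apply key k' n' hn' hk'
      have := congrArg (Subtype.val) h; push_cast at this; exact this
    have h2 : (B + k) * (A + k') = (B + k') * (A + k) := by
      rw [hg] at heq; field_simp at heq; linear_combination heq
    have h3 : (B - A) * ((k':E) - k) = 0 := by linear_combination h2
    have hBA : B - A ≠ 0 := by
      intro h; apply hab; have := congrArg Subtype.val (sub_eq_zero.mp h)
      exact this.symm
    have h4 : (k:E) = (k':E) := (sub_eq_zero.mp ((mul_eq_zero.mp h3).resolve_left hBA)).symm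
    exact_mod_cast h4

set_option synthInstance.maxHeartbeats 1000000 in
set_option maxHeartbeats 1000000 in
/-- If no other conjugate of β has the same m-th power, then adjoining β^m adjoins β. -/
lemma aux_adjoin_pow_eq (β : ℂ) (hβ : IsIntegral ℚ β) (m : ℕ) (hm : 0 < m)
    (H : ∀ β' : ℂ, Polynomial.aeval β' (minpoly ℚ β) = 0 → β' ^ m = β ^ m → β' = β) :
    ℚ⟮β ^ m⟯ = ℚ⟮β⟯ := by
  apply le_antisymm
  · rw [adjoin_simple_le_iff]
    exact pow_mem (mem_adjoin_simple_self ℚ β) m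
  · rw [adjoin_simple_le_iff]
    set F : IntermediateField ℚ ℂ := ℚ⟮β ^ m⟯ with hF
    haveI : CharZero F := charZero_of_injective_algebraMap (algebraMap ℚ F).injective
    have hβF : IsIntegral F β := hβ.tower_top
    set q : F[X] := minpoly F β with hq
    have hsplits : Splits (q.map (algebraMap F ℂ)) := IsAlgClosed.splits _
    have hsep : q.Separable := (minpoly.irreducible hβF).separable
    have hnodup : (q.aroots ℂ).Nodup := nodup_roots (hsep.map (f := algebraMap F ℂ))
    have hβs : β ∈ q.aroots ℂ := by
      rw [mem_aroots]
      exact ⟨minpoly.ne_zero hβF, minpoly.aeval F β⟩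
    by_contra hmem
    have hdeg2 : 2 ≤ q.natDegree := by
      rw [hq, minpoly.two_le_natDegree_iff hβF]
      intro hmem'
      apply hmem
      obtain ⟨y, hy⟩ := hmem'
      rw [← hy]; exact y.2
    have hcard : Multiset.card (q.aroots ℂ) = q.natDegree := by
      have h5 := hsplits.natDegree_eq_card_roots
      rw [natDegree_map] at h5
      rw [show (q.map (algebraMap (↥F) ℂ)).roots = q.aroots ℂ from rfl] at h5
      omega
    have hcard2 : 0 < Multiset.card ((q.aroots ℂ).erase β) := by
      rw [Multiset.card_erase_of_mem hβs, hcard]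
      exact Nat.lt_pred_iff.mpr hdeg2
    obtain ⟨β', hβ'⟩ := Multiset.card_pos_iff_exists_mem.mp hcard2
    have hβ'ne : β' ≠ β := ((Multiset.Nodup.mem_erase_iff hnodup).mp hβ').1
    have hβ'root : β' ∈ q.aroots ℂ := Multiset.mem_of_mem_erase hβ'
    have hβ'q : Polynomial.aeval β' q = 0 := ((mem_aroots).mp hβ'root).2
    set x : F := ⟨β ^ m, mem_adjoin_simple_self ℚ (β ^ m)⟩ with hx
    have hdvd : q ∣ X ^ m - C x := by
      apply minpoly.dvd
      have hxc : (algebraMap F ℂ) x = β ^ m := rfl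
      simp [hxc]
    have hpow : β' ^ m = β ^ m := by
      obtain ⟨c, hc⟩ := hdvd
      have h6 := congrArg (Polynomial.aeval β') hc
      rw [map_mul, hβ'q, zero_mul, map_sub, map_pow, Polynomial.aeval_X,
        Polynomial.aeval_C] at h6
      have hxc : (algebraMap F ℂ) x = β ^ m := rfl
      rw [hxc] at h6
      exact sub_eq_zero.mp h6
    have hβ'conj : Polynomial.aeval β' (minpoly ℚ β) = 0 := by
      have hdvd2 : q ∣ (minpoly ℚ β).map (algebraMap ℚ F) :=
        minpoly.dvd_map_of_isScalarTower ℚ F β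
      obtain ⟨c, hc⟩ := hdvd2
      have h7 := congrArg (Polynomial.aeval β') hc
      rw [Polynomial.aeval_map_algebraMap] at h7
      rw [h7, map_mul, hβ'q, zero_mul]
    exact hβ'ne (H β' hβ'conj hpow)

lemma aux_adjoin_inv (x : ℂ) : ℚ⟮x⁻¹⟯ = ℚ⟮x⟯ := by
  apply le_antisymm
  · rw [adjoin_simple_le_iff]
    exact inv_mem (mem_adjoin_simple_self ℚ x)
  · rw [adjoin_simple_le_iff]
    have := inv_mem (mem_adjoin_simple_self ℚ x⁻¹)
    rwa [inv_inv] at this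



set_option maxHeartbeats 1000000 in
theorem stmt_1 (α : ℂ) (hα : IsAlgebraic ℚ α) :
    ∃ k : ℤ, ∀ m : ℤ, m ≠ 0 →
      (minpoly ℚ ((α + (k : ℂ)) ^ m)).natDegree = (minpoly ℚ α).natDegree := by
  have hint : IsIntegral ℚ α := hα.isIntegral
  set p : ℚ[X] := minpoly ℚ α with hp
  have hp0 : p ≠ 0 := minpoly.ne_zero hint
  set S : Finset ℂ := (p.aroots ℂ).toFinset with hS
  have hSint : ∀ x ∈ (S : Set ℂ), IsIntegral ℚ x := by
    intro x hx
    have hx' : x ∈ p.aroots ℂ := by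
      simpa [hS] using hx
    exact IsAlgebraic.isIntegral ⟨p, hp0, ((mem_aroots).mp hx').2⟩
  set E : IntermediateField ℚ ℂ := IntermediateField.adjoin ℚ (S : Set ℂ) with hE
  haveI hfd : FiniteDimensional ℚ E :=
    IntermediateField.finiteDimensional_adjoin fun x hx => hSint x hx
  have hSE : ∀ x ∈ S, x ∈ E := fun x hx => IntermediateField.subset_adjoin ℚ _ hx
  have hαS : α ∈ S := by
    rw [hS, Multiset.mem_toFinset, mem_aroots]
    exact ⟨hp0, minpoly.aeval ℚ α⟩
  -- the set of bad shifts
  set Z : Set ℤ := {k | (∃ a ∈ S, ∃ b ∈ S, a ≠ b ∧ ∃ n : ℕ, 0 < n ∧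
      ((b + k) / (a + k)) ^ n = 1) ∨ ∃ a ∈ S, (k:ℂ) = -a} with hZ
  have hpair : ∀ a ∈ S, ∀ b ∈ S,
      {k : ℤ | a ≠ b ∧ ∃ n : ℕ, 0 < n ∧ ((b + k) / (a + k)) ^ n = 1}.Finite := by
    intro a ha b hb
    by_cases hab : a = b
    · apply Set.Finite.subset Set.finite_empty
      rintro k ⟨hne, -⟩
      exact absurd hab hne
    · exact Set.Finite.subset (aux_bad_finite E (hSE a ha) (hSE b hb) hab) fun k hk => hk.2
  have hneg : ∀ a ∈ S, {k : ℤ | (k:ℂ) = -a}.Finite := by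
    intro a _
    apply Set.Subsingleton.finite
    intro k hk k' hk'
    simp only [Set.mem_setOf_eq] at hk hk'
    exact_mod_cast hk.trans hk'.symm
  have hZfin : Z.Finite := by
    apply Set.Finite.subset (Set.Finite.union
      (Set.Finite.biUnion S.finite_toSet fun a ha =>
        Set.Finite.biUnion S.finite_toSet fun b hb =>
          hpair a (Finset.mem_coe.mp ha) b (Finset.mem_coe.mp hb))
      (Set.Finite.biUnion S.finite_toSet fun a ha => hneg a (Finset.mem_coe.mp ha)))
    rintro k (⟨a, ha, b, hb, hab, hn⟩ | ⟨a, ha, h⟩)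
    · exact Or.inl (Set.mem_biUnion (Finset.mem_coe.mpr ha)
        (Set.mem_biUnion (Finset.mem_coe.mpr hb) ⟨hab, hn⟩))
    · exact Or.inr (Set.mem_biUnion (Finset.mem_coe.mpr ha) h)
  obtain ⟨k, hk⟩ := hZfin.infinite_compl.nonempty
  rw [Set.mem_compl_iff, hZ, Set.mem_setOf_eq] at hk
  push_neg at hk
  obtain ⟨hk1, hk2⟩ := hk
  refine ⟨k, ?_⟩
  set β : ℂ := α + (k : ℂ) with hβ
  have hkalg : (algebraMap ℚ ℂ) (k:ℚ) = (k:ℂ) := by simp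
  have hβint : IsIntegral ℚ β := hint.add (hkalg ▸ isIntegral_algebraMap)
  have hβ0 : β ≠ 0 := by
    intro h0
    exact hk2 α hαS (by linear_combination h0)
  have hmβ : minpoly ℚ β = p.comp (X - C (k:ℚ)) := by
    have h := minpoly.add_algebraMap (A := ℚ) α (k:ℚ)
    rwa [hkalg] at h
  have hdegβ : (minpoly ℚ β).natDegree = p.natDegree := by
    rw [hmβ, natDegree_comp, natDegree_X_sub_C, mul_one]
  have hroots : ∀ β' : ℂ, Polynomial.aeval β' (minpoly ℚ β) = 0 → β' - k ∈ S := by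
    intro β' hr
    rw [hmβ, aeval_comp, map_sub, Polynomial.aeval_X, Polynomial.aeval_C, hkalg] at hr
    rw [hS, Multiset.mem_toFinset, mem_aroots]
    exact ⟨hp0, hr⟩
  intro m hm
  set n : ℕ := m.natAbs with hn
  have hnpos : 0 < n := Int.natAbs_pos.mpr hm
  have key : ℚ⟮β ^ n⟯ = ℚ⟮β⟯ := by
    apply aux_adjoin_pow_eq β hβint n hnpos
    intro β' hroot hpow
    by_contra hne
    have hne' : α ≠ β' - k := fun h => hne (by linear_combination -h)
    have heq : ((β' - (k:ℂ) + k) / (α + k)) ^ n = 1 := by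
      rw [show β' - (k:ℂ) + k = β' by ring, ← hβ, div_pow, hpow,
        div_self (pow_ne_zero n hβ0)]
    exact hk1 α hαS (β' - k) (hroots β' hroot) hne' n hnpos heq
  have hzp : ℚ⟮β ^ m⟯ = ℚ⟮β⟯ := by
    rcases Int.natAbs_eq m with h | h
    · rw [h, zpow_natCast]
      exact key
    · rw [h, zpow_neg, zpow_natCast, aux_adjoin_inv]
      exact key
  have hmem : β ^ m ∈ ℚ⟮β⟯ := by
    rw [← hzp]
    exact mem_adjoin_simple_self ℚ (β ^ m)
  haveI : FiniteDimensional ℚ ℚ⟮β⟯ := adjoin.finiteDimensional hβint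
  have hintm : IsIntegral ℚ (β ^ m) :=
    IsIntegral.map (ℚ⟮β⟯.val) (IsIntegral.of_finite ℚ (⟨β ^ m, hmem⟩ : ℚ⟮β⟯))
  have e1 := IntermediateField.adjoin.finrank hintm
  have e2 := IntermediateField.adjoin.finrank hβint
  rw [← hdegβ, ← e2, ← hzp, e1]
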